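/- arXiv:1812.01794 — 2 statements merged into one kernel-verified Lean document; each statement's English description precedes it below -/
import Mathlib

section
/- Let 2 ≤ ℓ ≤ n be integers and let p ∈ (0,1). Let U_1,…,U_{n−1} be i.i.d. uniform random variables on [0,p], let U_{(ℓ−1)} denote the (ℓ−1)-th largest among them, and let W′ be a random variable that, conditioned on U_1,…,U_{n−1}, is uniformly distributed on [U_{(ℓ−1)}, 1]. Then Pr[W′ > p] = Pr[W_{ℓ−1,n−1} > p and X_{(1),n−1} < p] / p^{n−1}. (This expresses that the law of W_{ℓ,n} conditioned on X_{(1),n} = p equals the law of W_{ℓ−1,n−1} conditioned on X_{(1),n−1} < p.) -/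
open MeasureTheory Set
open scoped ENNReal

/-- The uniform distribution on `[0,1]`. -/
noncomputable def unif : Measure ℝ := volume.restrict (Set.Icc 0 1)

instance : IsProbabilityMeasure unif := by
  constructor
  simp [unif, Real.volume_Icc]

/-- The uniform distribution on `[0,p]` (for `p > 0`), as the pushforward of the uniform
distribution on `[0,1]` under multiplication by `p`. -/
noncomputable def unifTo (p : ℝ) : Measure ℝ := Measure.map (fun u => p * u) unif

instance (p : ℝ) : IsProbabilityMeasure (unifTo p) :=
  Measure.isProbabilityMeasure_map (by fun_prop)

/-- The `k`-th largest entry (1-indexed) of a tuple `x : Fin n → ℝ`. -/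
noncomputable def kthLargest {n : ℕ} (x : Fin n → ℝ) (k : ℕ) : ℝ :=
  if h : n - k < n then x (Tuple.sort x ⟨n - k, h⟩) else 0

/-- Given the draws `x` and an independent uniform `u ∈ [0,1]`, this is the random
variable `W_{ℓ,·}` which, conditioned on `x`, is uniform on `[X_{(ℓ)}, 1]`. -/
noncomputable def Wvar {n : ℕ} (ℓ : ℕ) (x : Fin n → ℝ) (u : ℝ) : ℝ :=
  kthLargest x ℓ + u * (1 - kthLargest x ℓ)

lemma unifTo_eq' {p : ℝ} (hp : 0 < p) :
    Measure.map (fun u => p * u) (volume.restrict (Set.Icc (0:ℝ) 1)) =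
      ENNReal.ofReal p⁻¹ • volume.restrict (Set.Icc 0 p) := by
  ext s hs
  rw [Measure.map_apply (by fun_prop) hs,
    Measure.restrict_apply ((by fun_prop : Measurable fun u => p * u) hs),
    Measure.smul_apply, Measure.restrict_apply hs]
  have hpre : (fun u => p * u) ⁻¹' s ∩ Icc 0 1 = (fun u => p * u) ⁻¹' (s ∩ Icc 0 p) := by
    ext x
    simp only [mem_inter_iff, mem_preimage, mem_Icc]
    constructor
    · rintro ⟨h1, h2, h3⟩
      exact ⟨h1, mul_nonneg hp.le h2, by nlinarith⟩
    · rintro ⟨h1, h2, h3⟩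
      have hx0 : 0 ≤ x := (mul_nonneg_iff_of_pos_left hp).mp h2
      refine ⟨h1, hx0, ?_⟩
      nlinarith
  rw [hpre, Real.volume_preimage_mul_left (ne_of_gt hp), abs_of_pos (by positivity)]
  rfl

lemma pi_smul' {m : ℕ} (c : ℝ≥0∞) (hc : c ≠ ⊤) (ν : Measure ℝ) [IsFiniteMeasure ν] :
    Measure.pi (fun _ : Fin m => c • ν) = c ^ m • Measure.pi (fun _ : Fin m => ν) := by
  haveI : IsFiniteMeasure (c • ν) := ν.smul_finite hc
  refine Measure.pi_eq fun s _ => ?_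
  simp only [Measure.smul_apply, Measure.pi_pi, smul_eq_mul, Finset.prod_mul_distrib,
    Finset.prod_const, Finset.card_univ, Fintype.card_fin]

lemma pi_restrict' {m : ℕ} (s : Set ℝ) (hs : MeasurableSet s) :
    Measure.pi (fun _ : Fin m => (volume : Measure ℝ).restrict s) =
      (Measure.pi fun _ : Fin m => (volume : Measure ℝ)).restrict (univ.pi fun _ => s) := by
  refine Measure.pi_eq fun t ht => ?_
  rw [Measure.restrict_apply (MeasurableSet.univ_pi ht), ← Set.pi_inter_distrib,
    Measure.pi_pi]
  simp only [Measure.restrict_apply (ht _)]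

lemma prod_smul_left' {α β : Type*} [MeasurableSpace α] [MeasurableSpace β]
    (c : ℝ≥0∞) (μ : Measure α) (ν : Measure β) [SFinite μ] [SFinite ν] :
    (c • μ).prod ν = c • μ.prod ν := by
  ext s hs
  rw [Measure.prod_apply hs, Measure.smul_apply, Measure.prod_apply hs,
    lintegral_smul_measure]

lemma kthLargest_one_lt_iff {m : ℕ} (hm : 0 < m) (x : Fin m → ℝ) {p : ℝ} :
    kthLargest x 1 < p ↔ ∀ i, x i < p := by
  have h : m - 1 < m := by omega
  rw [kthLargest, dif_pos h]
  constructor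
  · intro hlt i
    have hj : x i = (x ∘ Tuple.sort x) ((Tuple.sort x).symm i) := by simp
    have hle : (x ∘ Tuple.sort x) ((Tuple.sort x).symm i) ≤ (x ∘ Tuple.sort x) ⟨m - 1, h⟩ :=
      Tuple.monotone_sort x (by
        rw [Fin.le_def]
        exact Nat.le_sub_one_of_lt ((Tuple.sort x).symm i).isLt)
    calc x i = _ := hj
      _ ≤ (x ∘ Tuple.sort x) ⟨m - 1, h⟩ := hle
      _ < p := hlt
  · intro hall
    exact hall _

/-- Let `2 ≤ ℓ ≤ n` and `p ∈ (0,1)`.  Let `U_1,…,U_{n-1}` be i.i.d. uniform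
on `[0,p]`, let `U_{(ℓ-1)}` be the `(ℓ-1)`-th largest among them, and `W′` uniform on
`[U_{(ℓ-1)},1]` conditioned on the `U`'s.  Then
`Pr[W′ > p] = Pr[W_{ℓ-1,n-1} > p ∧ X_{(1),n-1} < p] / p^{n-1}`. -/
theorem stmt4 (n ℓ : ℕ) (hℓ : 2 ≤ ℓ) (hℓn : ℓ ≤ n) :
    ∀ p ∈ Set.Ioo (0 : ℝ) 1,
      (((Measure.pi fun _ : Fin (n - 1) => unifTo p).prod unif)
        {ω : (Fin (n - 1) → ℝ) × ℝ | p < Wvar (ℓ - 1) ω.1 ω.2}).toReal =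
      (((Measure.pi fun _ : Fin (n - 1) => unif).prod unif)
        {ω : (Fin (n - 1) → ℝ) × ℝ |
          p < Wvar (ℓ - 1) ω.1 ω.2 ∧ kthLargest ω.1 1 < p}).toReal / p ^ (n - 1) := by
  rintro p ⟨hp0, hp1⟩
  have hm : 0 < n - 1 := by omega
  set m := n - 1 with hmdef
  set A : Set ((Fin m → ℝ) × ℝ) := {ω | p < Wvar (ℓ - 1) ω.1 ω.2} with hA
  set B : Set ((Fin m → ℝ) × ℝ) := {ω | kthLargest ω.1 1 < p} with hB
  set S : Set (Fin m → ℝ) := univ.pi fun _ => Icc 0 p with hS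
  set T : Set (Fin m → ℝ) := univ.pi fun _ => Icc 0 1 with hT
  set R : Set (Fin m → ℝ) := univ.pi fun _ => Ico 0 p with hR
  set μpi : Measure (Fin m → ℝ) := Measure.pi fun _ => (volume : Measure ℝ) with hμpi
  set μ : Measure ((Fin m → ℝ) × ℝ) := μpi.prod unif with hμ
  haveI : IsFiniteMeasure ((volume : Measure ℝ).restrict (Icc 0 p)) := by
    constructor
    rw [Measure.restrict_apply_univ]
    simp [Real.volume_Icc]
  -- step 1-4: the left-hand measure
  have h1 : unifTo p = ENNReal.ofReal p⁻¹ • (volume : Measure ℝ).restrict (Icc 0 p) :=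
    unifTo_eq' hp0
  have hLHS : ((Measure.pi fun _ : Fin m => unifTo p).prod unif) A
      = ENNReal.ofReal p⁻¹ ^ m * μ (A ∩ S ×ˢ univ) := by
    rw [show (fun _ : Fin m => unifTo p)
        = fun _ : Fin m => ENNReal.ofReal p⁻¹ • (volume : Measure ℝ).restrict (Icc 0 p)
        from funext fun _ => h1,
      pi_smul' _ ENNReal.ofReal_ne_top _, pi_restrict' _ measurableSet_Icc,
      prod_smul_left', Measure.smul_apply, Measure.restrict_prod_eq_prod_univ,
      Measure.restrict_apply' ((MeasurableSet.univ_pi fun _ => measurableSet_Icc).prod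
        MeasurableSet.univ)]
    rfl
  -- the right-hand measure
  have hRHS : ((Measure.pi fun _ : Fin m => unif).prod unif)
      {ω : (Fin m → ℝ) × ℝ | p < Wvar (ℓ - 1) ω.1 ω.2 ∧ kthLargest ω.1 1 < p}
      = μ (A ∩ B ∩ T ×ˢ univ) := by
    have hset : {ω : (Fin m → ℝ) × ℝ | p < Wvar (ℓ - 1) ω.1 ω.2 ∧ kthLargest ω.1 1 < p}
        = A ∩ B := rfl
    rw [hset, show (fun _ : Fin m => unif)
        = fun _ : Fin m => (volume : Measure ℝ).restrict (Icc 0 1)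
        from funext fun _ => rfl,
      pi_restrict' _ measurableSet_Icc, Measure.restrict_prod_eq_prod_univ,
      Measure.restrict_apply' ((MeasurableSet.univ_pi fun _ => measurableSet_Icc).prod
        MeasurableSet.univ)]
  -- step 6: B ∩ T×univ = R×univ
  have h6 : B ∩ T ×ˢ univ = R ×ˢ univ := by
    ext ω
    simp only [hB, hT, hR, mem_inter_iff, mem_setOf_eq, mem_prod, mem_univ, and_true,
      mem_pi, mem_Icc, mem_Ico, kthLargest_one_lt_iff hm]
    constructor
    · rintro ⟨hlt, hbox⟩ i _
      exact ⟨(hbox i trivial).1, hlt i⟩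
    · intro hbox
      exact ⟨fun i => (hbox i trivial).2,
        fun i _ => ⟨(hbox i trivial).1, le_of_lt (lt_trans (hbox i trivial).2 hp1)⟩⟩
  -- step 7: μ (A ∩ S×univ) = μ (A ∩ R×univ)
  have hRsubS : R ⊆ S := pi_mono fun i _ => Ico_subset_Icc_self
  have hSmeas : μpi S = ENNReal.ofReal p ^ m := by
    rw [hS, hμpi, Measure.pi_pi]
    simp [Real.volume_Icc]
  have hRmeas : μpi R = ENNReal.ofReal p ^ m := by
    rw [hR, hμpi, Measure.pi_pi]
    simp [Real.volume_Ico]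
  have hdiffnull : μpi (S \ R) = 0 := by
    rw [measure_diff hRsubS ((MeasurableSet.univ_pi fun _ => measurableSet_Ico).nullMeasurableSet)
      (by rw [hRmeas]; exact ENNReal.pow_ne_top ENNReal.ofReal_ne_top), hSmeas, hRmeas,
      tsub_self]
  have haeeq : (S ×ˢ (univ : Set ℝ) : Set ((Fin m → ℝ) × ℝ)) =ᵐ[μ] R ×ˢ univ := by
    rw [MeasureTheory.ae_eq_set]
    constructor
    · refine measure_mono_null (fun ω hω => ?_) (show μ ((S \ R) ×ˢ (univ : Set ℝ)) = 0 by
        rw [hμ, Measure.prod_prod, hdiffnull, zero_mul])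
      exact ⟨⟨hω.1.1, fun hR' => hω.2 ⟨hR', hω.1.2⟩⟩, hω.1.2⟩
    · have : (R ×ˢ (univ : Set ℝ)) \ (S ×ˢ univ) = ∅ := by
        rw [diff_eq_empty]
        exact prod_mono_left hRsubS
      rw [this, measure_empty]
  have h7 : μ (A ∩ S ×ˢ univ) = μ (A ∩ R ×ˢ univ) :=
    measure_congr (Filter.EventuallyEq.inter (Filter.EventuallyEq.refl _ _) haeeq)
  -- assemble
  rw [hLHS, hRHS, inter_assoc, h6, h7, ENNReal.toReal_mul, ENNReal.toReal_pow,
    ENNReal.toReal_ofReal (inv_nonneg.mpr hp0.le)]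
  rw [div_eq_mul_inv, ← inv_pow, mul_comm]
end

section
/- Let n ≥ 1 and m ≥ 2 be integers and let c be a real number with c ≥ n·(1 + ln(1 + m/n)). Then for all p ∈ (0,1), (1 − p^c)·p^n ≥ Pr[Y*_{n,m−1} > p and X_{(1),n} < p]; equivalently, the conditional probability that the maximum of c i.i.d. uniform draws exceeds p, given X_{(1),n} < p, is at least Pr[Y*_{n,m−1} > p | X_{(1),n} < p]. -/
open MeasureTheory Set
open scoped ENNReal NNReal

open Classical in
/-- Using an auxiliary uniform `v ∈ [0,1]` as randomness, pick (uniformly at random when `v`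
is uniform) the value `y j` for an index `j` in the set `{j | t < y j}`.  Returns `0` if
that set is empty. -/
noncomputable def pickedY {k : ℕ} (y : Fin k → ℝ) (t v : ℝ) : ℝ :=
  let S : Finset (Fin k) := Finset.univ.filter (fun j => t < y j)
  ((S.sort (· ≤ ·)).map y).getD (min (Int.toNat ⌊v * S.card⌋) (S.card - 1)) 0

open Classical in
/-- The random variable `Y*_{n,m-1}`: it equals `0` if `Y_j < X_{(1),n}` for all `j`, and
otherwise equals `Y_J` where `J` is uniform on `{j | Y_j > X_{(1),n}}` (chosen using the
auxiliary independent uniform `v`). -/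
noncomputable def Ystar {n k : ℕ} (x : Fin n → ℝ) (y : Fin k → ℝ) (v : ℝ) : ℝ :=
  if ∀ j, y j < kthLargest x 1 then 0 else pickedY y (kthLargest x 1) v

/-- The sample space: `n` i.i.d. uniforms `X`, `m-1` i.i.d. uniforms `Y`, and the auxiliary
uniform used to choose `J`, all independent. -/
noncomputable def P₈ (n m : ℕ) : Measure ((Fin n → ℝ) × (Fin (m - 1) → ℝ) × ℝ) :=
  (Measure.pi fun _ : Fin n => unif).prod
    ((Measure.pi fun _ : Fin (m - 1) => unif).prod unif)

-- ===================== auxiliary development =====================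

lemma kthLargest_one_eq_sup' {n : ℕ} (hn : 0 < n) (x : Fin n → ℝ) :
    kthLargest x 1 = Finset.univ.sup' ⟨⟨0, hn⟩, Finset.mem_univ _⟩ x := by
  have h : n - 1 < n := by omega
  rw [kthLargest, dif_pos h]
  apply le_antisymm
  · exact Finset.le_sup' x (Finset.mem_univ _)
  · refine Finset.sup'_le _ _ fun i _ => ?_
    have hle : (Tuple.sort x).symm i ≤ ⟨n - 1, h⟩ := by
      rw [Fin.le_def]
      have := ((Tuple.sort x).symm i).isLt
      simp only [Fin.val_mk]
      omega
    have := Tuple.monotone_sort x hle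
    simpa using this

lemma measurable_kthLargest_one {n : ℕ} (hn : 0 < n) :
    Measurable fun x : Fin n → ℝ => kthLargest x 1 := by
  have : (fun x : Fin n → ℝ => kthLargest x 1)
      = fun x => Finset.univ.sup' ⟨⟨0, hn⟩, Finset.mem_univ _⟩ x := by
    ext x; exact kthLargest_one_eq_sup' hn x
  rw [this]
  have h2 : (fun x : Fin n → ℝ => Finset.univ.sup' ⟨⟨0, hn⟩, Finset.mem_univ _⟩ x)
      = Finset.univ.sup' ⟨⟨0, hn⟩, Finset.mem_univ _⟩ (fun i (x : Fin n → ℝ) => x i) := by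
    ext x; exact (Finset.sup'_apply _ (fun i (y : Fin n → ℝ) => y i) x).symm
  rw [h2]
  exact Finset.measurable_sup' _ fun i _ => measurable_pi_apply i

section Meas

variable {k : ℕ} {α : Type*} [MeasurableSpace α]

lemma measurable_cnt {f : α → Fin k → ℝ} {g : α → ℝ} (hf : Measurable f) (hg : Measurable g) :
    Measurable fun a => (Finset.univ.filter fun j => g a < f a j).card := by
  have h : (fun a => (Finset.univ.filter fun j => g a < f a j).card)
      = fun a => ∑ j : Fin k, if g a < f a j then 1 else 0 := by
    ext a; rw [Finset.card_filter]
  rw [h]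
  exact Finset.measurable_sum _ fun j _ =>
    Measurable.ite (measurableSet_lt hg (hf.eval)) measurable_const measurable_const

lemma measurableSet_filter_eq {f : α → Fin k → ℝ} {g : α → ℝ} (hf : Measurable f)
    (hg : Measurable g) (S₀ : Finset (Fin k)) :
    MeasurableSet {a | (Finset.univ.filter fun j => g a < f a j) = S₀} := by
  have h : {a | (Finset.univ.filter fun j => g a < f a j) = S₀}
      = ⋂ j : Fin k, {a | (g a < f a j) ↔ j ∈ S₀} := by
    ext a
    simp [Finset.ext_iff]
  rw [h]
  refine MeasurableSet.iInter fun j => ?_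
  by_cases hj : j ∈ S₀
  · simp only [hj, iff_true]
    exact measurableSet_lt hg hf.eval
  · simp only [hj, iff_false, not_lt]
    exact measurableSet_le hf.eval hg

lemma measurable_pickedY (hk : 0 < k) :
    Measurable fun w : (Fin k → ℝ) × ℝ × ℝ => pickedY w.1 w.2.1 w.2.2 := by
  classical
  set j₀ : Fin k := ⟨0, hk⟩ with hj₀
  set F : Finset (Fin k) → ((Fin k → ℝ) × ℝ × ℝ) → ℝ := fun S₀ w =>
    ∑ r ∈ Finset.range S₀.card,
      if min (Int.toNat ⌊w.2.2 * (S₀.card : ℝ)⌋) (S₀.card - 1) = r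
      then w.1 ((S₀.sort (· ≤ ·)).getD r j₀) else 0 with hF
  have key : ∀ w : (Fin k → ℝ) × ℝ × ℝ,
      pickedY w.1 w.2.1 w.2.2 = F (Finset.univ.filter fun j => w.2.1 < w.1 j) w := by
    intro w
    set S := Finset.univ.filter fun j => w.2.1 < w.1 j with hS
    rw [pickedY]
    rcases Nat.eq_zero_or_pos S.card with h0 | hpos
    · have hnil : S.sort (· ≤ ·) = [] :=
        List.eq_nil_of_length_eq_zero (by rw [Finset.length_sort]; exact h0)
      have h1 : F S w = 0 := by
        have hSe : S = ∅ := Finset.card_eq_zero.mp h0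
        rw [hSe, hF]; simp
      rw [h1, hnil]
      simp
    · set c := S.card with hc
      set idx := min (Int.toNat ⌊w.2.2 * (c : ℝ)⌋) (c - 1) with hidx
      have hidxlt : idx < c := lt_of_le_of_lt (min_le_right _ _) (by omega)
      have hlen' : (S.sort (· ≤ ·)).length = c := by simp [Finset.length_sort, hc]
      have hlen : ((S.sort (· ≤ ·)).map w.1).length = c := by simp [hlen']
      rw [hF]
      simp only [← hS, ← hc, ← hidx]
      rw [Finset.sum_eq_single_of_mem idx (Finset.mem_range.mpr hidxlt)
        (fun b _ hb => if_neg fun h => hb h.symm)]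
      rw [if_pos rfl]
      rw [List.getD_eq_getElem _ _ (by rw [hlen]; exact hidxlt),
        List.getD_eq_getElem _ _ (by rw [hlen']; exact hidxlt)]
      simp
  have hrw : (fun w : (Fin k → ℝ) × ℝ × ℝ => pickedY w.1 w.2.1 w.2.2)
      = fun w => ∑ S₀ ∈ (Finset.univ : Finset (Fin k)).powerset,
          if (Finset.univ.filter fun j => w.2.1 < w.1 j) = S₀ then F S₀ w else 0 := by
    ext w
    rw [key w, Finset.sum_eq_single_of_mem (Finset.univ.filter fun j => w.2.1 < w.1 j)
      (Finset.mem_powerset.mpr (Finset.subset_univ _))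
      (fun b _ hb => if_neg fun h => hb h.symm)]
    rw [if_pos rfl]
  rw [hrw]
  refine Finset.measurable_sum _ fun S₀ _ => Measurable.ite ?_ ?_ measurable_const
  · exact measurableSet_filter_eq measurable_fst (measurable_fst.comp measurable_snd) S₀
  · refine Finset.measurable_sum _ fun r _ => Measurable.ite ?_
      ((measurable_pi_apply _).comp measurable_fst) measurable_const
    have hm : Measurable fun w : (Fin k → ℝ) × ℝ × ℝ =>
        min (Int.toNat ⌊w.2.2 * (S₀.card : ℝ)⌋) (S₀.card - 1) := by
      have h1 : Measurable fun w : (Fin k → ℝ) × ℝ × ℝ => w.2.2 * (S₀.card : ℝ) :=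
        (measurable_snd.comp measurable_snd).mul_const _
      have h2 : Measurable fun z : ℤ => min z.toNat (S₀.card - 1) := fun _ _ => trivial
      exact h2.comp ((Int.measurable_floor).comp h1)
    exact hm (measurableSet_singleton r)

lemma Ystar_eq_pickedY {n : ℕ} (x : Fin n → ℝ) (y : Fin k → ℝ) (v : ℝ) :
    Ystar x y v = pickedY y (kthLargest x 1) v := by
  rw [Ystar]
  split_ifs with h
  · have hemp : (Finset.univ.filter fun j => kthLargest x 1 < y j) = ∅ :=
      Finset.filter_false_of_mem fun j _ => not_lt.mpr (h j).le
    rw [pickedY]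
    simp [hemp]
  · rfl

end Meas


lemma lintegral_pi_prod {ι : Type*} [Fintype ι] [DecidableEq ι] {μ : Measure ℝ} [SigmaFinite μ]
    (f : ι → ℝ → ℝ≥0∞) (hf : ∀ i, Measurable (f i)) :
    ∫⁻ y : ι → ℝ, ∏ i, f i (y i) ∂(Measure.pi fun _ => μ) = ∏ i, ∫⁻ u, f i u ∂μ := by
  have hmeas : Measurable fun y : ι → ℝ => ∏ i, f i (y i) :=
    Finset.measurable_prod _ fun i _ => (hf i).comp (measurable_pi_apply i)
  have key : ∀ s : Finset ι, ∀ x : ι → ℝ,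
      (∫⋯∫⁻_s, (fun y => ∏ i, f i (y i)) ∂(fun _ => μ)) x
        = (∏ i ∈ s, ∫⁻ u, f i u ∂μ) * ∏ i ∈ sᶜ, f i (x i) := by
    intro s
    induction s using Finset.induction_on with
    | empty => intro x; simp [MeasureTheory.lmarginal_empty]
    | @insert j s hj ih =>
      intro x
      rw [MeasureTheory.lmarginal_insert _ hmeas hj]
      have hrw : ∀ xj : ℝ,
          (∫⋯∫⁻_s, (fun y => ∏ i, f i (y i)) ∂(fun _ => μ)) (Function.update x j xj)
          = (∏ i ∈ s, ∫⁻ u, f i u ∂μ) * (f j xj * ∏ i ∈ sᶜ.erase j, f i (x i)) := by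
        intro xj
        rw [ih]
        congr 1
        have hjc : j ∈ sᶜ := Finset.mem_compl.mpr hj
        rw [← Finset.mul_prod_erase sᶜ _ hjc, Function.update_self]
        congr 1
        exact Finset.prod_congr rfl fun i hi =>
          congrArg (f i) (Function.update_of_ne (Finset.ne_of_mem_erase hi) _ _)
      simp_rw [hrw]
      rw [lintegral_const_mul _ ((hf j).mul_const _),
        lintegral_mul_const _ (hf j), Finset.prod_insert hj, Finset.compl_insert]
      ring
  have h1 := key Finset.univ (fun _ => 0)
  rw [MeasureTheory.lintegral_eq_lmarginal_univ (f := fun y => ∏ i, f i (y i)) (fun _ => 0), h1]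
  simp

lemma unif_apply (s : Set ℝ) : unif s = volume (s ∩ Icc 0 1) :=
  Measure.restrict_apply' measurableSet_Icc

lemma unif_Ioi {a : ℝ} (h0 : 0 ≤ a) (h1 : a ≤ 1) : unif (Ioi a) = ENNReal.ofReal (1 - a) := by
  rw [unif_apply]
  have : Ioi a ∩ Icc 0 1 = Ioc a 1 := by
    ext x
    simp only [mem_inter_iff, mem_Ioi, mem_Icc, mem_Ioc]
    constructor
    · rintro ⟨h, _, h2⟩; exact ⟨h, h2⟩
    · rintro ⟨h, h2⟩; exact ⟨h, le_trans h0 h.le, h2⟩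
  rw [this, Real.volume_Ioc]

lemma unif_Iic {a : ℝ} (h0 : 0 ≤ a) (h1 : a ≤ 1) : unif (Iic a) = ENNReal.ofReal a := by
  rw [unif_apply]
  have : Iic a ∩ Icc 0 1 = Icc 0 a := by
    ext x
    simp only [mem_inter_iff, mem_Iic, mem_Icc]
    constructor
    · rintro ⟨h, h1', _⟩; exact ⟨h1', h⟩
    · rintro ⟨h1', h⟩; exact ⟨h, h1', h.trans h1⟩
  rw [this, Real.volume_Icc, sub_zero]

lemma lintegral_unif_ofReal {f : ℝ → ℝ} (hf : IntegrableOn f (Icc 0 1))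
    (h0 : ∀ x ∈ Icc (0:ℝ) 1, 0 ≤ f x) :
    ∫⁻ s, ENNReal.ofReal (f s) ∂unif = ENNReal.ofReal (∫ s in Icc (0:ℝ) 1, f s) :=
  (ofReal_integral_eq_lintegral_ofReal hf
    ((ae_restrict_mem measurableSet_Icc).mono h0)).symm

lemma lint_ofReal_pow (j : ℕ) :
    ∫⁻ s, (ENNReal.ofReal s) ^ j ∂unif = ENNReal.ofReal (1 / (j + 1)) := by
  have h1 : ∫⁻ s, (ENNReal.ofReal s) ^ j ∂unif = ∫⁻ s, ENNReal.ofReal (s ^ j) ∂unif := by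
    refine lintegral_congr_ae (((ae_restrict_mem measurableSet_Icc).mono ?_))
    intro s hs
    simp [ENNReal.ofReal_pow hs.1]
  rw [h1, lintegral_unif_ofReal ((continuous_pow j).integrableOn_Icc)
    (fun x hx => pow_nonneg hx.1 j)]
  congr 1
  rw [integral_Icc_eq_integral_Ioc, ← intervalIntegral.integral_of_le zero_le_one,
    integral_pow]
  norm_num


lemma vslice_bound {k : ℕ} (hk : 0 < k) (y : Fin k → ℝ) {t p : ℝ} (ht0 : 0 ≤ t) (htp : t < p) :
    unif {v | p < pickedY y t v} ≤
      ENNReal.ofReal (((Finset.univ.filter fun j => p < y j).card : ℝ) /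
        ((Finset.univ.filter fun j => t < y j).card : ℝ)) := by
  classical
  have hp0 : 0 < p := lt_of_le_of_lt ht0 htp
  set S : Finset (Fin k) := Finset.univ.filter (fun j => t < y j) with hS
  set c := S.card with hc
  set L : List ℝ := (S.sort (· ≤ ·)).map y with hL
  have hpick : ∀ v, pickedY y t v = L.getD (min (Int.toNat ⌊v * (c : ℝ)⌋) (c - 1)) 0 :=
    fun v => rfl
  have hlenS : (S.sort (· ≤ ·)).length = c := by simp [hc]
  have hlenL : L.length = c := by simp [hL, hlenS]
  rcases Nat.eq_zero_or_pos c with h0 | hcpos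
  · have hempty : {v : ℝ | p < pickedY y t v} = ∅ := by
      ext v
      simp only [mem_setOf_eq, mem_empty_iff_false, iff_false, not_lt]
      rw [hpick v, List.eq_nil_of_length_eq_zero (hlenL.trans h0)]
      simpa using hp0.le
    rw [hempty]
    simp
  · set T : Finset ℕ := (Finset.range c).filter (fun r => p < L.getD r 0) with hT
    have hcR : (0:ℝ) < c := by exact_mod_cast hcpos
    set J : ℕ → Set ℝ := fun r =>
      if r = c - 1 then Icc ((r : ℝ) / c) 1 else Ico ((r : ℝ) / c) ((r + 1 : ℝ) / c) with hJ
    have hsub : {v : ℝ | p < pickedY y t v} ∩ Icc 0 1 ⊆ ⋃ r ∈ T, J r := by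
      rintro v ⟨hv, hv0, hv1⟩
      rw [mem_setOf_eq, hpick v] at hv
      set a := Int.toNat ⌊v * (c : ℝ)⌋ with ha
      set r := min a (c - 1) with hr
      have hrc : r < c := lt_of_le_of_lt (min_le_right _ _) (by omega)
      have hrT : r ∈ T := Finset.mem_filter.mpr ⟨Finset.mem_range.mpr hrc, hv⟩
      have hfl0 : (0:ℤ) ≤ ⌊v * (c : ℝ)⌋ := Int.floor_nonneg.mpr (by positivity)
      have hfla : (a : ℤ) = ⌊v * (c : ℝ)⌋ := Int.toNat_of_nonneg hfl0
      have hfle : (a : ℝ) ≤ v * c := by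
        have h1 : ((a : ℤ) : ℝ) ≤ v * c := hfla ▸ Int.floor_le _
        exact_mod_cast h1
      refine mem_biUnion hrT ?_
      simp only [hJ]
      by_cases hre : r = c - 1
      · rw [if_pos hre]
        refine ⟨?_, hv1⟩
        rw [div_le_iff₀ hcR]
        have h1 : c - 1 ≤ a := by omega
        have h2 : ((c:ℝ) - 1) ≤ a := by
          have := (Nat.cast_le (α := ℝ)).mpr h1
          rw [Nat.cast_sub hcpos] at this
          simpa using this
        have h3 : ((r:ℝ)) = (c:ℝ) - 1 := by
          rw [hre, Nat.cast_sub hcpos]; simp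
        rw [h3]
        linarith
      · have hra : r = a := by
          rcases le_total a (c-1) with h | h
          · rw [hr, min_eq_left h]
          · exfalso; exact hre (by rw [hr, min_eq_right h])
        rw [if_neg hre]
        constructor
        · rw [div_le_iff₀ hcR]
          rw [hra]; exact hfle
        · rw [lt_div_iff₀ hcR]
          have := Int.lt_floor_add_one (v * (c:ℝ))
          rw [← hfla] at this
          rw [hra]
          push_cast at this ⊢
          linarith
    have hvol : ∀ r ∈ T, volume (J r) ≤ ENNReal.ofReal ((c:ℝ)⁻¹) := by
      intro r hr
      have hrc : (r : ℕ) < c := Finset.mem_range.mp (Finset.mem_filter.mp hr).1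
      simp only [hJ]
      have hcne : (c:ℝ) ≠ 0 := ne_of_gt hcR
      by_cases hre : r = c - 1
      · rw [if_pos hre, Real.volume_Icc]
        apply ENNReal.ofReal_le_ofReal
        have h3 : ((r:ℝ)) = (c:ℝ) - 1 := by
          rw [hre, Nat.cast_sub hcpos]; simp
        rw [h3]
        have h4 : (1:ℝ) - ((c:ℝ) - 1) / c = (c:ℝ)⁻¹ := by
          field_simp
          ring
        rw [h4]
      · rw [if_neg hre, Real.volume_Ico]
        apply ENNReal.ofReal_le_ofReal
        have h4 : ((r:ℝ) + 1) / c - (r:ℝ) / c = (c:ℝ)⁻¹ := by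
          field_simp
          ring
        rw [h4]
    have hTcard : T.card ≤ (Finset.univ.filter fun j => p < y j).card := by
      apply Finset.card_le_card_of_injOn (fun r => (S.sort (· ≤ ·)).getD r ⟨0, hk⟩)
      · intro r hr
        obtain ⟨hr1, hr2⟩ := Finset.mem_filter.mp hr
        have hrc : r < c := Finset.mem_range.mp hr1
        have hgd : L.getD r 0 = y ((S.sort (· ≤ ·)).getD r ⟨0, hk⟩) := by
          rw [List.getD_eq_getElem _ _ (by rw [hlenL]; exact hrc),
            List.getD_eq_getElem _ _ (by rw [hlenS]; exact hrc)]
          simp [hL]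
        exact Finset.mem_filter.mpr ⟨Finset.mem_univ _, hgd ▸ hr2⟩
      · intro r1 h1 r2 h2 he
        simp only [Finset.mem_coe] at h1 h2
        dsimp only at he
        have hrc1 : r1 < c := Finset.mem_range.mp (Finset.mem_filter.mp h1).1
        have hrc2 : r2 < c := Finset.mem_range.mp (Finset.mem_filter.mp h2).1
        rw [List.getD_eq_getElem _ _ (by rw [hlenS]; exact hrc1),
          List.getD_eq_getElem _ _ (by rw [hlenS]; exact hrc2)] at he
        exact (List.Nodup.getElem_inj_iff (S.sort_nodup (· ≤ ·))).mp he
    calc unif {v | p < pickedY y t v}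
        = volume ({v | p < pickedY y t v} ∩ Icc 0 1) := unif_apply _
      _ ≤ volume (⋃ r ∈ T, J r) := measure_mono hsub
      _ ≤ ∑ r ∈ T, volume (J r) := measure_biUnion_finset_le T J
      _ ≤ ∑ _r ∈ T, ENNReal.ofReal ((c:ℝ)⁻¹) := Finset.sum_le_sum hvol
      _ = T.card * ENNReal.ofReal ((c:ℝ)⁻¹) := by rw [Finset.sum_const, nsmul_eq_mul]
      _ = ENNReal.ofReal ((T.card : ℝ) * (c:ℝ)⁻¹) := by
          rw [ENNReal.ofReal_mul (by positivity)]
          congr 1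
          exact (ENNReal.ofReal_natCast _).symm
      _ ≤ ENNReal.ofReal (((Finset.univ.filter fun j => p < y j).card : ℝ) / (c : ℝ)) := by
          apply ENNReal.ofReal_le_ofReal
          rw [div_eq_mul_inv]
          have : (T.card : ℝ) ≤ ((Finset.univ.filter fun j => p < y j).card : ℝ) :=
            Nat.cast_le.mpr hTcard
          exact mul_le_mul_of_nonneg_right this (by positivity)

lemma ybound {k : ℕ} (hk : 0 < k) {t p : ℝ} (ht0 : 0 ≤ t) (htp : t < p) (hp1 : p < 1) :
    ∫⁻ y, ENNReal.ofReal (((Finset.univ.filter fun j => p < y j).card : ℝ) /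
        ((Finset.univ.filter fun j => t < y j).card : ℝ)) ∂(Measure.pi fun _ : Fin k => unif)
      ≤ ENNReal.ofReal ((1 - p) * ∑ i ∈ Finset.range k, t ^ i) := by
  classical
  have hp0 : 0 < p := lt_of_le_of_lt ht0 htp
  have ht1 : t < 1 := htp.trans hp1
  have h1t : (1:ℝ) - t ≠ 0 := by linarith
  set μY := (Measure.pi fun _ : Fin k => unif) with hμY
  set Bc : (Fin k → ℝ) → ℕ := fun y => (Finset.univ.filter fun j => p < y j).card with hBc
  set Kc : (Fin k → ℝ) → ℕ := fun y => (Finset.univ.filter fun j => t < y j).card with hKc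
  have hBK : ∀ y, Bc y ≤ Kc y := fun y => Finset.card_le_card
    (Finset.monotone_filter_right _ fun j _ hj => htp.trans hj)
  have hKk : ∀ y, Kc y ≤ k := fun y => le_trans (Finset.card_filter_le _ _) (by simp)
  have hmono : Measurable fun s : ℝ => ENNReal.ofReal s := ENNReal.measurable_ofReal
  have hcastm : Measurable fun n : ℕ => (n : ℝ≥0∞) := fun _ _ => trivial
  have hKm : Measurable Kc := measurable_cnt measurable_id measurable_const
  have hBm : Measurable Bc := measurable_cnt measurable_id measurable_const
  -- step 1 : pointwise representation as an integral in s
  have step1 : ∀ y : Fin k → ℝ, ENNReal.ofReal ((Bc y : ℝ) / (Kc y : ℝ))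
      = ∫⁻ s, (Bc y : ℝ≥0∞) * (ENNReal.ofReal s) ^ (Kc y - 1) ∂unif := by
    intro y
    rw [lintegral_const_mul _ (hmono.pow_const _), lint_ofReal_pow]
    rcases Nat.eq_zero_or_pos (Kc y) with h0 | hpos
    · have hB0 : Bc y = 0 := by have := hBK y; omega
      simp [hB0, h0]
    · have h1 : ((Kc y - 1 : ℕ) : ℝ) + 1 = (Kc y : ℝ) := by
        have h2 : (Kc y - 1 : ℕ) + 1 = Kc y := by omega
        exact_mod_cast congrArg (Nat.cast (R := ℝ)) h2
      rw [h1, ← ENNReal.ofReal_natCast (Bc y), ← ENNReal.ofReal_mul (by positivity),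
        mul_one_div]
  -- joint measurability
  set F : (Fin k → ℝ) × ℝ → ℝ≥0∞ :=
    fun z => (Bc z.1 : ℝ≥0∞) * (ENNReal.ofReal z.2) ^ (Kc z.1 - 1) with hF
  have hFm : Measurable F := by
    have hrep : F = fun z => ∑ c₀ ∈ Finset.range (k+1),
        if Kc z.1 = c₀ then (Bc z.1 : ℝ≥0∞) * (ENNReal.ofReal z.2) ^ (c₀ - 1) else 0 := by
      funext z
      rw [Finset.sum_eq_single_of_mem (Kc z.1)
        (Finset.mem_range.mpr (Nat.lt_succ_of_le (hKk z.1)))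
        (fun b _ hb => if_neg fun h => hb h.symm), if_pos rfl]
    rw [hrep]
    refine Finset.measurable_sum _ fun c₀ _ => Measurable.ite ?_ ?_ measurable_const
    · exact (hKm.comp measurable_fst) (measurableSet_singleton c₀)
    · exact (hcastm.comp (hBm.comp measurable_fst)).mul
        ((hmono.comp measurable_snd).pow_const _)
  -- step 3 : inner integral over y for a fixed σ
  have step3 : ∀ σ : ℝ≥0∞, ∫⁻ y, (Bc y : ℝ≥0∞) * σ ^ (Kc y - 1) ∂μY
      = ((k : ℝ≥0∞) * ENNReal.ofReal (1 - p)) *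
          (ENNReal.ofReal t + σ * ENNReal.ofReal (1 - t)) ^ (k - 1) := by
    intro σ
    set g : Fin k → Fin k → ℝ → ℝ≥0∞ := fun j i u =>
      if i = j then (if p < u then 1 else 0) else (if t < u then σ else 1) with hg
    have hgm : ∀ j i, Measurable (g j i) := by
      intro j i
      by_cases h : i = j
      · simp only [hg, if_pos h]
        exact Measurable.ite measurableSet_Ioi measurable_const measurable_const
      · simp only [hg, if_neg h]
        exact Measurable.ite measurableSet_Ioi measurable_const measurable_const
    have hpoint : ∀ y : Fin k → ℝ, (Bc y : ℝ≥0∞) * σ ^ (Kc y - 1)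
        = ∑ j : Fin k, ∏ i : Fin k, g j i (y i) := by
      intro y
      have hBcast : (Bc y : ℝ≥0∞) = ∑ j : Fin k, if p < y j then (1:ℝ≥0∞) else 0 := by
        simp only [hBc, Finset.card_filter]
        push_cast
        exact Finset.sum_congr rfl fun j _ => by split_ifs <;> simp
      rw [hBcast, Finset.sum_mul]
      refine Finset.sum_congr rfl fun j _ => ?_
      by_cases hpj : p < y j
      · rw [if_pos hpj, one_mul]
        rw [← Finset.mul_prod_erase Finset.univ _ (Finset.mem_univ j)]
        have hgj : g j j (y j) = 1 := by simp [hg, hpj]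
        rw [hgj, one_mul]
        have hrest : ∏ i ∈ Finset.univ.erase j, g j i (y i)
            = ∏ i ∈ Finset.univ.erase j, (if t < y i then σ else 1) :=
          Finset.prod_congr rfl fun i hi => by
            simp only [hg]; rw [if_neg (Finset.ne_of_mem_erase hi)]
        rw [hrest, Finset.prod_ite, Finset.prod_const, Finset.prod_const, one_pow, mul_one]
        congr 1
        rw [Finset.filter_erase, Finset.card_erase_of_mem]
        exact Finset.mem_filter.mpr ⟨Finset.mem_univ _, htp.trans hpj⟩
      · rw [if_neg hpj, zero_mul]
        symm
        apply Finset.prod_eq_zero (Finset.mem_univ j)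
        simp [hg, hpj]
    have hIj : ∀ j : Fin k, ∫⁻ u, g j j u ∂unif = ENNReal.ofReal (1 - p) := by
      intro j
      have hind : (fun u : ℝ => g j j u) = (Ioi p).indicator fun _ => (1:ℝ≥0∞) := by
        funext u
        by_cases h : p < u <;> simp [hg, h, Set.indicator, Set.mem_Ioi]
      rw [hind, lintegral_indicator measurableSet_Ioi]
      simp [unif_Ioi hp0.le hp1.le]
    have hIo : ∀ j i : Fin k, i ≠ j → ∫⁻ u, g j i u ∂unif
        = ENNReal.ofReal t + σ * ENNReal.ofReal (1 - t) := by
      intro j i hij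
      have hsplit : (fun u : ℝ => g j i u)
          = fun u => (Ioi t).indicator (fun _ => σ) u
              + (Iic t).indicator (fun _ => (1:ℝ≥0∞)) u := by
        funext u
        by_cases h : t < u
        · simp [hg, hij, h, Set.indicator, Set.mem_Ioi, Set.mem_Iic, not_le.mpr h]
        · simp [hg, hij, h, Set.indicator, Set.mem_Ioi, Set.mem_Iic, not_lt.mp h]
      rw [hsplit, lintegral_add_left (measurable_const.indicator measurableSet_Ioi),
        lintegral_indicator measurableSet_Ioi, lintegral_indicator measurableSet_Iic,
        setLIntegral_const, setLIntegral_const, unif_Ioi ht0 ht1.le, unif_Iic ht0 ht1.le]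
      ring
    calc ∫⁻ y, (Bc y : ℝ≥0∞) * σ ^ (Kc y - 1) ∂μY
        = ∫⁻ y, ∑ j : Fin k, ∏ i : Fin k, g j i (y i) ∂μY := lintegral_congr hpoint
      _ = ∑ j : Fin k, ∫⁻ y, ∏ i : Fin k, g j i (y i) ∂μY :=
          lintegral_finset_sum _ fun j _ => Finset.measurable_prod _ fun i _ =>
            (hgm j i).comp (measurable_pi_apply i)
      _ = ∑ j : Fin k, ∏ i : Fin k, ∫⁻ u, g j i u ∂unif :=
          Finset.sum_congr rfl fun j _ => lintegral_pi_prod _ (hgm j)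
      _ = ∑ _j : Fin k, ENNReal.ofReal (1 - p) *
            (ENNReal.ofReal t + σ * ENNReal.ofReal (1 - t)) ^ (k - 1) := by
          refine Finset.sum_congr rfl fun j _ => ?_
          rw [← Finset.mul_prod_erase Finset.univ _ (Finset.mem_univ j), hIj j]
          congr 1
          have : ∏ i ∈ Finset.univ.erase j, ∫⁻ u, g j i u ∂unif
              = ∏ _i ∈ Finset.univ.erase j,
                  (ENNReal.ofReal t + σ * ENNReal.ofReal (1 - t)) :=
            Finset.prod_congr rfl fun i hi => hIo j i (Finset.ne_of_mem_erase hi)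
          rw [this, Finset.prod_const, Finset.card_erase_of_mem (Finset.mem_univ j)]
          simp
      _ = ((k : ℝ≥0∞) * ENNReal.ofReal (1 - p)) *
            (ENNReal.ofReal t + σ * ENNReal.ofReal (1 - t)) ^ (k - 1) := by
          rw [Finset.sum_const, Finset.card_univ, Fintype.card_fin, nsmul_eq_mul]
          ring
  -- step 4 : outer integral over s
  have hmeas2 : Measurable fun s : ℝ =>
      (ENNReal.ofReal t + ENNReal.ofReal s * ENNReal.ofReal (1 - t)) ^ (k - 1) :=
    ((measurable_const.add (hmono.mul_const _)).pow_const _)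
  have hcont : Continuous fun s : ℝ => (t + s * (1 - t)) ^ (k - 1) :=
    (continuous_const.add (continuous_id.mul continuous_const)).pow _
  have step4 : ∫⁻ s, (ENNReal.ofReal t + ENNReal.ofReal s * ENNReal.ofReal (1 - t)) ^ (k - 1)
      ∂unif = ENNReal.ofReal ((1 - t)⁻¹ * ((1 - t ^ k) / k)) := by
    have hcg : ∫⁻ s, (ENNReal.ofReal t + ENNReal.ofReal s * ENNReal.ofReal (1 - t)) ^ (k - 1)
        ∂unif = ∫⁻ s, ENNReal.ofReal ((t + s * (1 - t)) ^ (k - 1)) ∂unif := by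
      refine lintegral_congr_ae (((ae_restrict_mem measurableSet_Icc).mono ?_))
      intro s hs
      simp only
      rw [← ENNReal.ofReal_mul hs.1, ← ENNReal.ofReal_add ht0 (by nlinarith [hs.1, hs.2]),
        ENNReal.ofReal_pow (by nlinarith [hs.1, hs.2])]
    rw [hcg, lintegral_unif_ofReal hcont.integrableOn_Icc
      (fun s hs => pow_nonneg (by nlinarith [hs.1, hs.2]) _)]
    congr 1
    rw [integral_Icc_eq_integral_Ioc, ← intervalIntegral.integral_of_le zero_le_one]
    have hid : ∀ s : ℝ, (t + s * (1 - t)) ^ (k - 1) = ((1 - t) * s + t) ^ (k - 1) := by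
      intro s; ring_nf
    simp_rw [hid]
    rw [intervalIntegral.integral_comp_mul_add (fun x => x ^ (k - 1)) h1t t]
    rw [show (1 - t) * 0 + t = t by ring, show (1 - t) * 1 + t = 1 by ring, integral_pow]
    have hk1 : k - 1 + 1 = k := by omega
    rw [hk1, smul_eq_mul, one_pow]
    have hkr : ((k - 1 : ℕ) : ℝ) + 1 = (k : ℝ) := by
      exact_mod_cast congrArg (Nat.cast (R := ℝ)) hk1
    rw [hkr]
  -- put everything together
  have hgeom : ∑ i ∈ Finset.range k, t ^ i = (1 - t ^ k) / (1 - t) := by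
    rw [geom_sum_eq ht1.ne]
    rw [div_eq_div_iff (by linarith) h1t]
    ring
  have main : ∫⁻ y, ENNReal.ofReal ((Bc y : ℝ) / (Kc y : ℝ)) ∂μY
      = ENNReal.ofReal ((1 - p) * ∑ i ∈ Finset.range k, t ^ i) := by
    calc ∫⁻ y, ENNReal.ofReal ((Bc y : ℝ) / (Kc y : ℝ)) ∂μY
        = ∫⁻ y, ∫⁻ s, F (y, s) ∂unif ∂μY := lintegral_congr step1
      _ = ∫⁻ s, ∫⁻ y, F (y, s) ∂μY ∂unif := lintegral_lintegral_swap hFm.aemeasurable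
      _ = ∫⁻ s, ((k : ℝ≥0∞) * ENNReal.ofReal (1 - p)) *
            (ENNReal.ofReal t + ENNReal.ofReal s * ENNReal.ofReal (1 - t)) ^ (k - 1) ∂unif :=
          lintegral_congr fun s => step3 (ENNReal.ofReal s)
      _ = ((k : ℝ≥0∞) * ENNReal.ofReal (1 - p)) *
            ∫⁻ s, (ENNReal.ofReal t + ENNReal.ofReal s * ENNReal.ofReal (1 - t)) ^ (k - 1)
              ∂unif := lintegral_const_mul _ hmeas2
      _ = ((k : ℝ≥0∞) * ENNReal.ofReal (1 - p)) *
            ENNReal.ofReal ((1 - t)⁻¹ * ((1 - t ^ k) / k)) := by rw [step4]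
      _ = ENNReal.ofReal ((1 - p) * ∑ i ∈ Finset.range k, t ^ i) := by
          rw [← ENNReal.ofReal_natCast k, ← ENNReal.ofReal_mul (by positivity),
            ← ENNReal.ofReal_mul (mul_nonneg (Nat.cast_nonneg k) (by linarith))]
          congr 1
          rw [hgeom]
          have hkne : (k : ℝ) ≠ 0 := by exact_mod_cast hk.ne'
          field_simp
  exact le_of_eq main

lemma yv_bound {k : ℕ} (hk : 0 < k) {t p : ℝ} (ht0 : 0 ≤ t) (htp : t < p) (hp1 : p < 1) :
    ((Measure.pi fun _ : Fin k => unif).prod unif)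
        {yv : (Fin k → ℝ) × ℝ | p < pickedY yv.1 t yv.2}
      ≤ ENNReal.ofReal ((1 - p) * ∑ i ∈ Finset.range k, t ^ i) := by
  have hms : MeasurableSet {yv : (Fin k → ℝ) × ℝ | p < pickedY yv.1 t yv.2} := by
    have hmp : Measurable fun yv : (Fin k → ℝ) × ℝ => pickedY yv.1 t yv.2 :=
      (measurable_pickedY hk).comp
        (measurable_fst.prodMk (measurable_const.prodMk measurable_snd))
    exact measurableSet_lt measurable_const hmp
  rw [Measure.prod_apply hms]
  refine le_trans (lintegral_mono fun y => ?_) (ybound hk ht0 htp hp1)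
  exact vslice_bound hk y ht0 htp

lemma unif_compl_Icc : unif (Icc (0:ℝ) 1)ᶜ = 0 := by
  rw [unif_apply]
  simp

lemma map_max_eq {n : ℕ} (hn : 0 < n) :
    Measure.map (fun x : Fin n → ℝ => kthLargest x 1) (Measure.pi fun _ : Fin n => unif)
      = unif.withDensity (fun u => ENNReal.ofReal (n * u ^ (n - 1))) := by
  have hmax := measurable_kthLargest_one hn
  have hdens : Measurable fun u : ℝ => ENNReal.ofReal ((n:ℝ) * u ^ (n - 1)) :=
    ENNReal.measurable_ofReal.comp ((continuous_const.mul (continuous_pow _)).measurable)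
  haveI hfin1 : IsProbabilityMeasure
      (Measure.map (fun x : Fin n → ℝ => kthLargest x 1) (Measure.pi fun _ : Fin n => unif)) :=
    Measure.isProbabilityMeasure_map hmax.aemeasurable
  refine MeasureTheory.Measure.ext_of_Iic _ _ fun u => ?_
  rw [Measure.map_apply hmax measurableSet_Iic,
    withDensity_apply _ measurableSet_Iic]
  have hset : (fun x : Fin n → ℝ => kthLargest x 1) ⁻¹' Iic u
      = Set.pi univ (fun _ => Iic u) := by
    ext x
    simp [kthLargest_one_eq_sup' hn, Finset.sup'_le_iff, Set.mem_pi, Pi.le_def]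
    exact (Finset.sup'_le_iff _ _).trans (by simp)
  rw [hset, Measure.pi_pi, Finset.prod_const, Finset.card_univ, Fintype.card_fin]
  have hrr : unif.restrict (Iic u) = volume.restrict (Iic u ∩ Icc 0 1) := by
    rw [unif, Measure.restrict_restrict measurableSet_Iic]
  rw [hrr]
  rcases lt_or_ge u 0 with hu | hu
  · have h1 : Iic u ∩ Icc (0:ℝ) 1 = ∅ := by
      apply eq_empty_iff_forall_notMem.mpr
      rintro x ⟨hx1, hx2, _⟩
      simp only [mem_Iic] at hx1
      linarith
    rw [h1]
    have h2 : unif (Iic u) = 0 := by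
      rw [unif_apply]
      have : Iic u ∩ Icc (0:ℝ) 1 = ∅ := h1
      rw [this]
      simp
    rw [h2]
    simp [zero_pow hn.ne']
  · set a := min u 1 with ha
    have ha0 : 0 ≤ a := le_min hu zero_le_one
    have ha1 : a ≤ 1 := min_le_right _ _
    have h1 : Iic u ∩ Icc (0:ℝ) 1 = Icc 0 a := by
      ext x
      simp only [mem_inter_iff, mem_Iic, mem_Icc, ha, le_min_iff]
      constructor
      · rintro ⟨h1, h2, h3⟩; exact ⟨h2, h1, h3⟩
      · rintro ⟨h2, h1, h3⟩; exact ⟨h1, h2, h3⟩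
    rw [h1]
    have h2 : unif (Iic u) = ENNReal.ofReal a := by
      rw [unif_apply]
      have : Iic u ∩ Icc (0:ℝ) 1 = Icc 0 a := h1
      rw [this, Real.volume_Icc, sub_zero]
    rw [h2]
    have h3 : ∫⁻ x in Icc 0 a, ENNReal.ofReal ((n:ℝ) * x ^ (n - 1)) ∂volume
        = ENNReal.ofReal (a ^ n) := by
      rw [← ofReal_integral_eq_lintegral_ofReal (f := fun x : ℝ => (n:ℝ) * x ^ (n - 1))
        (((continuous_const.mul (continuous_pow _))).integrableOn_Icc)
        ((ae_restrict_mem measurableSet_Icc).mono fun x hx => mul_nonneg (Nat.cast_nonneg n) (pow_nonneg hx.1 _))]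
      congr 1
      rw [integral_Icc_eq_integral_Ioc, ← intervalIntegral.integral_of_le ha0,
        intervalIntegral.integral_const_mul, integral_pow]
      have hn1 : n - 1 + 1 = n := by omega
      rw [hn1]
      have hnr : ((n - 1 : ℕ) : ℝ) + 1 = (n : ℝ) := by
        exact_mod_cast congrArg (Nat.cast (R := ℝ)) hn1
      rw [hnr]
      have hnne : (n:ℝ) ≠ 0 := by exact_mod_cast hn.ne'
      field_simp
      simp [zero_pow hn.ne']
    rw [h3, ← ENNReal.ofReal_pow ha0]

lemma final_integral {n k : ℕ} (hn : 0 < n) {p : ℝ} (hp0 : 0 < p) (hp1 : p < 1) :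
    ∫⁻ u, ENNReal.ofReal ((n:ℝ) * u ^ (n-1)) *
        (if 0 ≤ u ∧ u ≤ p then ENNReal.ofReal ((1-p) * ∑ i ∈ Finset.range k, u ^ i) else 0) ∂unif
      = ENNReal.ofReal ((1-p) * ∑ i ∈ Finset.range k, (n:ℝ)/((n:ℝ)+i) * p^(n+i)) := by
  classical
  set f : ℝ → ℝ := fun u => ((n:ℝ) * u^(n-1)) * ((1-p) * ∑ i ∈ Finset.range k, u ^ i) with hf
  have hcont : Continuous f :=
    ((continuous_const.mul (continuous_pow _)).mul
      (continuous_const.mul (continuous_finset_sum _ fun i _ => continuous_pow i)))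
  have hcongr : ∫⁻ u, ENNReal.ofReal ((n:ℝ) * u ^ (n-1)) *
      (if 0 ≤ u ∧ u ≤ p then ENNReal.ofReal ((1-p) * ∑ i ∈ Finset.range k, u ^ i) else 0) ∂unif
      = ∫⁻ u, ENNReal.ofReal ((Iic p).indicator f u) ∂unif := by
    refine lintegral_congr_ae (((ae_restrict_mem measurableSet_Icc).mono ?_))
    intro u hu
    simp only
    by_cases hup : u ≤ p
    · rw [if_pos ⟨hu.1, hup⟩, Set.indicator_of_mem (mem_Iic.mpr hup),
        ← ENNReal.ofReal_mul (mul_nonneg (Nat.cast_nonneg n) (pow_nonneg hu.1 _))]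
    · rw [if_neg (fun h => hup h.2), Set.indicator_of_notMem (fun h => hup (mem_Iic.mp h)),
        mul_zero, ENNReal.ofReal_zero]
  rw [hcongr, lintegral_unif_ofReal ((hcont.integrableOn_Icc).indicator measurableSet_Iic)
    (fun u hu => by
      by_cases hup : u ≤ p
      · rw [Set.indicator_of_mem (mem_Iic.mpr hup)]
        have h1 : (0:ℝ) ≤ ∑ i ∈ Finset.range k, u ^ i :=
          Finset.sum_nonneg fun i _ => pow_nonneg hu.1 _
        have h2 : (0:ℝ) ≤ (n:ℝ) * u^(n-1) :=
          mul_nonneg (Nat.cast_nonneg n) (pow_nonneg hu.1 _)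
        exact mul_nonneg h2 (mul_nonneg (by linarith) h1)
      · rw [Set.indicator_of_notMem (fun h => hup (mem_Iic.mp h))])]
  congr 1
  rw [setIntegral_indicator measurableSet_Iic]
  have hinter : Icc (0:ℝ) 1 ∩ Iic p = Icc 0 p := by
    ext x
    simp only [mem_inter_iff, mem_Icc, mem_Iic]
    constructor
    · rintro ⟨⟨h1, _⟩, h3⟩; exact ⟨h1, h3⟩
    · rintro ⟨h1, h3⟩; exact ⟨⟨h1, by linarith⟩, h3⟩
  rw [hinter]
  have hfs : ∀ u : ℝ, f u = ∑ i ∈ Finset.range k, ((1-p) * n) * u^(n-1+i) := by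
    intro u
    rw [hf]
    simp only
    rw [Finset.mul_sum, Finset.mul_sum]
    refine Finset.sum_congr rfl fun i _ => by rw [pow_add]; ring
  simp_rw [hfs]
  rw [MeasureTheory.integral_finset_sum _ (f := fun i (x : ℝ) => (1-p) * (n:ℝ) * x^(n-1+i)) (fun i _ =>
    ((continuous_const.mul (continuous_pow _)).integrableOn_Icc))]
  rw [Finset.mul_sum]
  refine Finset.sum_congr rfl fun i _ => ?_
  rw [integral_Icc_eq_integral_Ioc, ← intervalIntegral.integral_of_le hp0.le,
    intervalIntegral.integral_const_mul, integral_pow]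
  have h1 : n - 1 + i + 1 = n + i := by omega
  rw [h1]
  have h2 : ((n - 1 + i : ℕ) : ℝ) + 1 = ((n + i : ℕ) : ℝ) := by
    exact_mod_cast congrArg (Nat.cast (R := ℝ)) h1
  rw [h2]
  have h3 : (0:ℝ) ^ (n + i) = 0 := zero_pow (by omega)
  rw [h3]
  have h4 : ((n+i:ℕ):ℝ) ≠ 0 := by
    have : 0 < n + i := by omega
    exact_mod_cast this.ne'
  push_cast
  field_simp
  ring

lemma sum_frac_le {n k : ℕ} (hn : 1 ≤ n) (hk : 1 ≤ k) :
    ∑ i ∈ Finset.range k, (n:ℝ)/((n:ℝ)+i)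
      ≤ 1 + (n:ℝ) * (Real.log ((n:ℝ) + (k - 1 : ℕ)) - Real.log n) := by
  have hnR : (0:ℝ) < n := by exact_mod_cast hn
  obtain ⟨K, rfl⟩ : ∃ K, k = K + 1 := ⟨k - 1, by omega⟩
  simp only [Nat.add_sub_cancel]
  rw [Finset.sum_range_succ']
  have h0 : (n:ℝ)/((n:ℝ) + (0:ℕ)) = 1 := by
    simp [ne_of_gt hnR]
  rw [h0]
  have hterm : ∀ i : ℕ, (n:ℝ)/((n:ℝ) + (i+1 : ℕ))
      ≤ (n:ℝ) * (Real.log ((n:ℝ) + (i+1:ℕ)) - Real.log ((n:ℝ) + i)) := by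
    intro i
    have hpos1 : (0:ℝ) < (n:ℝ) + i := by positivity
    have hpos2 : (0:ℝ) < (n:ℝ) + (i+1:ℕ) := by positivity
    have hlog := Real.log_le_sub_one_of_pos (x := ((n:ℝ) + i) / ((n:ℝ) + (i+1:ℕ)))
      (by positivity)
    rw [Real.log_div (ne_of_gt hpos1) (ne_of_gt hpos2)] at hlog
    have hkey : 1 / ((n:ℝ) + (i+1:ℕ)) ≤ Real.log ((n:ℝ) + (i+1:ℕ)) - Real.log ((n:ℝ) + i) := by
      have h2 : ((n:ℝ) + i) / ((n:ℝ) + (i+1:ℕ)) - 1 = -(1 / ((n:ℝ) + (i+1:ℕ))) := by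
        push_cast
        field_simp
        ring
      rw [h2] at hlog
      linarith
    calc (n:ℝ)/((n:ℝ) + (i+1 : ℕ)) = (n:ℝ) * (1 / ((n:ℝ) + (i+1:ℕ))) := by ring
      _ ≤ (n:ℝ) * (Real.log ((n:ℝ) + (i+1:ℕ)) - Real.log ((n:ℝ) + i)) :=
          mul_le_mul_of_nonneg_left hkey (by positivity)
  have hsum : ∑ i ∈ Finset.range K, (n:ℝ)/((n:ℝ) + (i+1 : ℕ))
      ≤ (n:ℝ) * (Real.log ((n:ℝ) + (K:ℕ)) - Real.log n) := by
    calc ∑ i ∈ Finset.range K, (n:ℝ)/((n:ℝ) + (i+1 : ℕ))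
        ≤ ∑ i ∈ Finset.range K,
            (n:ℝ) * (Real.log ((n:ℝ) + (i+1:ℕ)) - Real.log ((n:ℝ) + i)) :=
          Finset.sum_le_sum fun i _ => hterm i
      _ = (n:ℝ) * ∑ i ∈ Finset.range K,
            (Real.log ((n:ℝ) + (i+1:ℕ)) - Real.log ((n:ℝ) + i)) := by
          rw [Finset.mul_sum]
      _ = (n:ℝ) * (Real.log ((n:ℝ) + (K:ℕ)) - Real.log ((n:ℝ) + (0:ℕ))) := by
          congr 1
          have := Finset.sum_range_sub (fun i : ℕ => Real.log ((n:ℝ) + i)) K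
          push_cast at this ⊢
          linarith [this]
      _ = (n:ℝ) * (Real.log ((n:ℝ) + (K:ℕ)) - Real.log n) := by norm_num
  linarith

lemma key_ineq {n k : ℕ} (hn : 1 ≤ n) {p c : ℝ} (hp0 : 0 < p) (hp1 : p < 1)
    (hc : ∑ i ∈ Finset.range k, (n:ℝ)/((n:ℝ)+i) ≤ c) :
    (1-p) * ∑ i ∈ Finset.range k, (n:ℝ)/((n:ℝ)+i) * p^(n+i) ≤ (1 - p ^ c) * p ^ n := by
  set a : ℕ → ℝ := fun i => (n:ℝ)/((n:ℝ)+i) with ha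
  have hnR : (0:ℝ) < n := by exact_mod_cast hn
  have ha0 : ∀ i, 0 < a i := fun i => by positivity
  have ha1 : ∀ i, a i ≤ 1 := fun i => by
    rw [ha]
    simp only
    rw [div_le_one (by positivity)]
    have : (0:ℝ) ≤ i := Nat.cast_nonneg i
    linarith
  set A : ℕ → ℝ := fun j => ∑ i ∈ Finset.range j, a i with hA
  have hstep : ∀ j, (1-p) * ∑ i ∈ Finset.range j, a i * p^i ≤ 1 - p ^ (A j) := by
    intro j
    induction j with
    | zero => simp [hA, Real.rpow_zero]
    | succ j ih =>
      have hAsucc : A (j+1) = A j + a j := Finset.sum_range_succ a j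
      have hrpow : p ^ (A (j+1)) = p ^ (A j) * p ^ (a j) := by
        rw [hAsucc, Real.rpow_add hp0]
      have h1 : a j * (1-p) ≤ 1 - p ^ (a j) := by
        have hgm := Real.geom_mean_le_arith_mean2_weighted
          (w₁ := 1 - a j) (w₂ := a j) (p₁ := 1) (p₂ := p)
          (by linarith [ha1 j]) (ha0 j).le zero_le_one hp0.le (by ring)
        rw [Real.one_rpow] at hgm
        nlinarith [hgm]
      have hAj : A j ≤ (j : ℝ) := by
        calc A j = ∑ i ∈ Finset.range j, a i := rfl
          _ ≤ ∑ _i ∈ Finset.range j, (1:ℝ) := Finset.sum_le_sum fun i _ => ha1 i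
          _ = j := by simp
      have h2 : (p:ℝ)^(j:ℕ) ≤ p ^ (A j) := by
        rw [← Real.rpow_natCast p j]
        exact Real.rpow_le_rpow_of_exponent_ge hp0 hp1.le hAj
      have h3 : (1-p) * (a j * p^j) ≤ p ^ (A j) * (1 - p ^ (a j)) := by
        have hpA : (0:ℝ) ≤ p ^ (A j) := Real.rpow_nonneg hp0.le _
        calc (1-p) * (a j * p^j) ≤ (1-p) * (a j * p ^ (A j)) := by
              apply mul_le_mul_of_nonneg_left _ (by linarith)
              exact mul_le_mul_of_nonneg_left h2 (ha0 j).le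
          _ = p ^ (A j) * (a j * (1-p)) := by ring
          _ ≤ p ^ (A j) * (1 - p ^ (a j)) := mul_le_mul_of_nonneg_left h1 hpA
      rw [Finset.sum_range_succ, mul_add, hrpow]
      have : 1 - p ^ (A j) * p ^ (a j)
          = (1 - p ^ (A j)) + p ^ (A j) * (1 - p ^ (a j)) := by ring
      rw [this]
      exact add_le_add ih h3
  have hfinal := hstep k
  have hAc : p ^ c ≤ p ^ (A k) := Real.rpow_le_rpow_of_exponent_ge hp0 hp1.le hc
  have hsplit : (1-p) * ∑ i ∈ Finset.range k, a i * p^(n+i)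
      = ((1-p) * ∑ i ∈ Finset.range k, a i * p^i) * p^n := by
    rw [Finset.mul_sum, Finset.mul_sum, Finset.sum_mul]
    refine Finset.sum_congr rfl fun i _ => by rw [pow_add]; ring
  calc (1-p) * ∑ i ∈ Finset.range k, a i * p^(n+i)
      = ((1-p) * ∑ i ∈ Finset.range k, a i * p^i) * p^n := hsplit
    _ ≤ (1 - p ^ c) * p ^ n := by
        apply mul_le_mul_of_nonneg_right _ (pow_nonneg hp0.le n)
        linarith


/-- For integers `n ≥ 1`, `m ≥ 2` and a real `c ≥ n(1 + ln(1 + m/n))`,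
for all `p ∈ (0,1)`: `(1 - p^c)·p^n ≥ Pr[Y*_{n,m-1} > p ∧ X_{(1),n} < p]`, i.e. the
conditional probability that the maximum of `c` i.i.d. uniforms exceeds `p` given
`X_{(1),n} < p` is at least `Pr[Y*_{n,m-1} > p | X_{(1),n} < p]`. -/
theorem stmt8 (n m : ℕ) (c : ℝ) (hn : 1 ≤ n) (hm : 2 ≤ m)
    (hc : (n : ℝ) * (1 + Real.log (1 + (m : ℝ) / (n : ℝ))) ≤ c) :
    ∀ p ∈ Set.Ioo (0 : ℝ) 1,
      (P₈ n m {ω : (Fin n → ℝ) × (Fin (m - 1) → ℝ) × ℝ |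
          p < Ystar ω.1 ω.2.1 ω.2.2 ∧ kthLargest ω.1 1 < p}).toReal ≤
      (1 - p ^ c) * p ^ n := by
  intro p hp
  obtain ⟨hp0, hp1⟩ := hp
  have hn0 : 0 < n := hn
  have hk0 : 0 < m - 1 := by omega
  have hnR : (0:ℝ) < n := by exact_mod_cast hn
  have hmn0 : (0:ℝ) ≤ (m:ℝ)/n := by positivity
  have hlogpos : 0 ≤ Real.log (1 + (m:ℝ)/n) := Real.log_nonneg (by linarith)
  have hmax : Measurable fun x : Fin n → ℝ => kthLargest x 1 := measurable_kthLargest_one hn0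
  set k := m - 1 with hkdef
  set μX := (Measure.pi fun _ : Fin n => unif) with hμX
  set μY := (Measure.pi fun _ : Fin k => unif) with hμY
  set E := {ω : (Fin n → ℝ) × (Fin k → ℝ) × ℝ |
      p < Ystar ω.1 ω.2.1 ω.2.2 ∧ kthLargest ω.1 1 < p} with hE
  have hYm : Measurable fun ω : (Fin n → ℝ) × (Fin k → ℝ) × ℝ => Ystar ω.1 ω.2.1 ω.2.2 := by
    have heq : (fun ω : (Fin n → ℝ) × (Fin k → ℝ) × ℝ => Ystar ω.1 ω.2.1 ω.2.2)
        = fun ω => pickedY ω.2.1 (kthLargest ω.1 1) ω.2.2 :=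
      funext fun ω => Ystar_eq_pickedY ω.1 ω.2.1 ω.2.2
    rw [heq]
    exact (measurable_pickedY hk0).comp
      ((measurable_fst.comp measurable_snd).prodMk
        ((hmax.comp measurable_fst).prodMk (measurable_snd.comp measurable_snd)))
  have hEm : MeasurableSet E := (measurableSet_lt measurable_const hYm).inter
    (measurableSet_lt (hmax.comp measurable_fst) measurable_const)
  set H : ℝ → ℝ≥0∞ := fun t =>
    if 0 ≤ t ∧ t ≤ p then ENNReal.ofReal ((1-p) * ∑ i ∈ Finset.range k, t ^ i) else 0 with hH
  have hHm : Measurable H := by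
    refine Measurable.ite
      (measurableSet_Ici.inter measurableSet_Iic : MeasurableSet (Icc (0:ℝ) p)) ?_
      measurable_const
    exact ENNReal.measurable_ofReal.comp
      (continuous_const.mul (continuous_finset_sum _ fun i _ => continuous_pow i)).measurable
  have hdens : Measurable fun u : ℝ => ENNReal.ofReal ((n:ℝ) * u ^ (n - 1)) :=
    ENNReal.measurable_ofReal.comp ((continuous_const.mul (continuous_pow _)).measurable)
  have hae : ∀ᵐ x ∂μX, ∀ i, x i ∈ Icc (0:ℝ) 1 := by
    rw [MeasureTheory.ae_all_iff]
    intro i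
    refine ae_iff.mpr ?_
    have h1 : {x : Fin n → ℝ | ¬ x i ∈ Icc (0:ℝ) 1}
        = Function.eval i ⁻¹' (Icc (0:ℝ) 1)ᶜ := rfl
    rw [hμX, h1]
    exact Measure.pi_eval_preimage_null _ unif_compl_Icc
  have hslice : ∀ᵐ x ∂μX, (μY.prod unif) (Prod.mk x ⁻¹' E) ≤ H (kthLargest x 1) := by
    filter_upwards [hae] with x hx
    set t := kthLargest x 1 with htdef
    have ht01 : t ∈ Icc (0:ℝ) 1 := by
      rw [htdef, kthLargest_one_eq_sup' hn0]
      constructor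
      · exact le_trans (hx ⟨0, hn0⟩).1 (Finset.le_sup' x (Finset.mem_univ ⟨0, hn0⟩))
      · exact Finset.sup'_le _ _ fun i _ => (hx i).2
    by_cases htp : t < p
    · have hpre : Prod.mk x ⁻¹' E = {yv : (Fin k → ℝ) × ℝ | p < pickedY yv.1 t yv.2} := by
        ext yv
        simp only [hE, mem_preimage, mem_setOf_eq]
        rw [Ystar_eq_pickedY]
        exact ⟨fun h => h.1, fun h => ⟨h, htp⟩⟩
      rw [hpre, hH]
      simp only
      rw [if_pos ⟨ht01.1, htp.le⟩]
      exact yv_bound hk0 ht01.1 htp hp1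
    · have hpre : Prod.mk x ⁻¹' E = ∅ := by
        ext yv
        simp only [hE, mem_preimage, mem_setOf_eq, mem_empty_iff_false, iff_false]
        exact fun h => htp h.2
      rw [hpre]
      simp
  have hchain : P₈ n m E
      ≤ ENNReal.ofReal ((1-p) * ∑ i ∈ Finset.range k, (n:ℝ)/((n:ℝ)+i) * p^(n+i)) := by
    have h1 : P₈ n m E = ∫⁻ x, (μY.prod unif) (Prod.mk x ⁻¹' E) ∂μX :=
      Measure.prod_apply hEm
    rw [h1]
    calc ∫⁻ x, (μY.prod unif) (Prod.mk x ⁻¹' E) ∂μX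
        ≤ ∫⁻ x, H (kthLargest x 1) ∂μX := lintegral_mono_ae hslice
      _ = ∫⁻ t, H t ∂(Measure.map (fun x : Fin n → ℝ => kthLargest x 1) μX) :=
          (lintegral_map hHm hmax).symm
      _ = ∫⁻ t, H t ∂(unif.withDensity fun u => ENNReal.ofReal ((n:ℝ) * u ^ (n-1))) := by
          rw [hμX, map_max_eq hn0]
      _ = ∫⁻ u, ENNReal.ofReal ((n:ℝ) * u ^ (n-1)) * H u ∂unif := by
          rw [lintegral_withDensity_eq_lintegral_mul unif hdens hHm]
          simp [Pi.mul_apply]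
      _ = ENNReal.ofReal ((1-p) * ∑ i ∈ Finset.range k, (n:ℝ)/((n:ℝ)+i) * p^(n+i)) :=
          final_integral hn0 hp0 hp1
  have hsumc : ∑ i ∈ Finset.range k, (n:ℝ)/((n:ℝ)+i) ≤ c := by
    have h1 := sum_frac_le (n := n) (k := k) hn (by omega)
    have hlog : Real.log ((n:ℝ) + (k-1:ℕ)) - Real.log n ≤ Real.log (1 + (m:ℝ)/n) := by
      have harg : (n:ℝ) + (k-1:ℕ) ≤ (n:ℝ) * (1 + (m:ℝ)/n) := by
        have hcast : ((k-1:ℕ):ℝ) ≤ (m:ℝ) := by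
          have h2 : (k - 1 : ℕ) ≤ m := by omega
          exact_mod_cast h2
        have h3 : (n:ℝ) * (1 + (m:ℝ)/n) = n + m := by field_simp
        rw [h3]
        linarith
      have h2 : Real.log ((n:ℝ) + (k-1:ℕ)) ≤ Real.log ((n:ℝ) * (1 + (m:ℝ)/n)) :=
        Real.log_le_log (by positivity) harg
      rw [Real.log_mul (ne_of_gt hnR) (by positivity)] at h2
      linarith
    have h4 := mul_le_mul_of_nonneg_left hlog hnR.le
    have h5 : (n:ℝ) * (1 + Real.log (1 + (m:ℝ)/n))
        = n + n * Real.log (1 + (m:ℝ)/n) := by ring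
    have hn1R : (1:ℝ) ≤ n := by exact_mod_cast hn
    linarith
  have hfin := key_ineq (k := k) hn hp0 hp1 hsumc
  have hc0 : 0 ≤ c := by nlinarith
  have hrhs0 : 0 ≤ (1 - p ^ c) * p ^ n := by
    have hple : p ^ c ≤ 1 := Real.rpow_le_one hp0.le hp1.le hc0
    have := pow_nonneg hp0.le n
    nlinarith
  refine ENNReal.toReal_le_of_le_ofReal hrhs0 ?_
  exact le_trans hchain (le_trans (ENNReal.ofReal_le_ofReal hfin) le_rfl)
end
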